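/- Let M ∈ ℂ^{n×n} with entries m_{i,k} (indices 0,…,n−1), and define m̂_{i,k} = m_{i,k} − (−1)^{g(k)} · m_{(i−1) mod n, (k+1) mod n}, i.e., m̂_{i,k} is the (i,k) entry of the Stein displacement Δ_{Z_1,Z_{−1}}[M]. Then M admits the decomposition M = (1/2) · Σ_{i=0}^{n−1} Σ_{k=0}^{n−1} m̂_{i,k} · Z_1^i · J · Z_{−1}^{n−1−k}. -/

import Mathlib

open Matrix

/-- The `n × n` unit `f`-circulant matrix `Z_f`: entries `(Z_f)_{i,k} = 1` if `i = k+1`,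
`(Z_f)_{0,n−1} = f`, and `0` otherwise. -/
noncomputable def Zf (n : ℕ) (f : ℝ) : Matrix (Fin n) (Fin n) ℂ :=
  Matrix.of fun i k =>
    if (i : ℕ) = (k : ℕ) + 1 then 1
    else if (i : ℕ) = 0 ∧ (k : ℕ) = n - 1 then (f : ℂ)
    else 0

/-- The `n × n` reversal matrix `J`: entries `J_{i,k} = 1` if `i + k = n − 1`, else `0`. -/
noncomputable def Jrev (n : ℕ) : Matrix (Fin n) (Fin n) ℂ :=
  Matrix.of fun i k => if (i : ℕ) + (k : ℕ) = n - 1 then 1 else 0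

/-- The `f`-circulant matrix `Z_f(v)` generated by a vector `v ∈ ℂ^n`:
`(Z_f(v))_{i,k} = v_{i−k}` if `i ≥ k`, and `(Z_f(v))_{i,k} = f · v_{n+i−k}` if `i < k`. -/
noncomputable def ZfVec (n : ℕ) (f : ℝ) (v : Fin n → ℂ) : Matrix (Fin n) (Fin n) ℂ :=
  Matrix.of fun i k =>
    (if (k : ℕ) ≤ (i : ℕ) then 1 else (f : ℂ)) *
      v ⟨((i : ℕ) + n - (k : ℕ)) % n, Nat.mod_lt _ i.pos⟩

/-- g(k) = 0 for 0 ≤ k ≤ n−2 and g(n−1) = 1. -/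
def gfun (n k : ℕ) : ℕ := if k = n - 1 then 1 else 0

lemma mod_small {n x : ℕ} (h : x < 2 * n) : x % n = if x < n then x else x - n := by
  split_ifs with h1
  · exact Nat.mod_eq_of_lt h1
  · rw [Nat.mod_eq_sub_mod (by omega), Nat.mod_eq_of_lt (by omega)]

lemma div_small {n x : ℕ} (h : x < 2 * n) : x / n = if x < n then 0 else 1 := by
  split_ifs with h1
  · exact Nat.div_eq_of_lt h1
  · rw [Nat.div_eq_sub_div (by omega) (by omega), Nat.div_eq_of_lt (by omega)]

lemma Zf_pow_apply (n : ℕ) (f : ℝ) (p : ℕ) (a c : Fin n) :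
    (Zf n f ^ p) a c =
      if (a : ℕ) = ((c : ℕ) + p) % n then (f : ℂ) ^ (((c : ℕ) + p) / n) else 0 := by
  have hn : 0 < n := a.pos
  induction p generalizing c with
  | zero =>
    simp [Matrix.one_apply, Nat.mod_eq_of_lt c.isLt, Nat.div_eq_of_lt c.isLt, Fin.ext_iff]
  | succ p ih =>
    rw [pow_succ, Matrix.mul_apply]
    have hlt : ((c : ℕ) + 1) % n < n := Nat.mod_lt _ hn
    have hz : ∀ d : Fin n, Zf n f d c =
        if d = (⟨((c : ℕ) + 1) % n, hlt⟩ : Fin n) then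
          (if (c : ℕ) + 1 = n then (f : ℂ) else 1) else 0 := by
      intro d
      have hc := c.isLt
      have hd := d.isLt
      simp only [Zf, Matrix.of_apply, Fin.ext_iff]
      rw [mod_small (by omega : (c : ℕ) + 1 < 2 * n)]
      split_ifs <;> first | rfl | omega
    simp only [hz, mul_ite, mul_zero, mul_one]
    rw [Finset.sum_ite_eq' Finset.univ]
    simp only [Finset.mem_univ, if_true, ih]
    by_cases hcn : (c : ℕ) + 1 = n
    · rw [if_pos hcn]
      have h1 : ((c : ℕ) + 1) % n = 0 := by rw [hcn, Nat.mod_self]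
      have h2 : (c : ℕ) + (p + 1) = p + n := by omega
      rw [h1, h2, Nat.zero_add, Nat.add_mod_right, Nat.add_div_right _ hn]
      split_ifs <;> [rw [pow_succ]; rw [zero_mul]]
    · have h1 : ((c : ℕ) + 1) % n = (c : ℕ) + 1 := Nat.mod_eq_of_lt (by omega)
      have h2 : (c : ℕ) + 1 + p = (c : ℕ) + (p + 1) := by omega
      rw [if_neg hcn, h1, h2]

lemma Zf_prod_apply (n : ℕ) (i p : ℕ) (a b : Fin n) :
    (Zf n 1 ^ i * Jrev n * Zf n (-1) ^ p) a b =
      if (a : ℕ) = (n - 1 - (((b : ℕ) + p) % n) + i) % n then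
        (-1 : ℂ) ^ (((b : ℕ) + p) / n) else 0 := by
  have hn : 0 < n := a.pos
  rw [Matrix.mul_apply]
  have hd : ((b : ℕ) + p) % n < n := Nat.mod_lt _ hn
  have h1 : ∀ d : Fin n, (Zf n (-1) ^ p) d b =
      if d = (⟨((b : ℕ) + p) % n, hd⟩ : Fin n) then (-1 : ℂ) ^ (((b : ℕ) + p) / n) else 0 := by
    intro d
    rw [Zf_pow_apply]
    simp only [Fin.ext_iff]
    norm_num
  simp only [h1, mul_ite, mul_zero]
  rw [Finset.sum_ite_eq' Finset.univ]
  simp only [Finset.mem_univ, if_true]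
  have h2 : ∀ d : Fin n, (Zf n 1 ^ i * Jrev n) a d =
      if (a : ℕ) = (n - 1 - (d : ℕ) + i) % n then (1 : ℂ) else 0 := by
    intro d
    rw [Matrix.mul_apply]
    have hc : n - 1 - (d : ℕ) < n := by omega
    have h3 : ∀ c : Fin n, Jrev n c d =
        if c = (⟨n - 1 - (d : ℕ), hc⟩ : Fin n) then (1 : ℂ) else 0 := by
      intro c
      have := c.isLt; have := d.isLt
      simp only [Jrev, Matrix.of_apply, Fin.ext_iff]
      split_ifs <;> first | rfl | omega
    simp only [h3, mul_ite, mul_zero, mul_one]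
    rw [Finset.sum_ite_eq' Finset.univ]
    simp only [Finset.mem_univ, if_true]
    rw [Zf_pow_apply]
    norm_num
  rw [h2, ite_mul, one_mul, zero_mul]

open Fin.NatCast Fin.CommRing

lemma telescope (m : ℕ) (M : Matrix (Fin (m+1)) (Fin (m+1)) ℂ) (a b : Fin (m+1)) :
    ∑ k : Fin (m+1),
      (M (a + b - k) k - (if (k : ℕ) = m then (-1:ℂ) else 1) * M (a + b - k - 1) (k + 1)) *
        (if (k : ℕ) < (b : ℕ) then (-1:ℂ) else 1) = 2 * M a b := by
  have hsplit : ∀ k : Fin (m+1),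
      (M (a + b - k) k - (if (k : ℕ) = m then (-1:ℂ) else 1) * M (a + b - k - 1) (k + 1)) *
        (if (k : ℕ) < (b : ℕ) then (-1:ℂ) else 1)
      = (if (k : ℕ) < (b : ℕ) then (-1:ℂ) else 1) * M (a + b - k) k
        - ((if (k : ℕ) < (b : ℕ) then (-1:ℂ) else 1) * (if (k : ℕ) = m then (-1:ℂ) else 1))
            * M (a + b - k - 1) (k + 1) := fun k => by ring
  rw [Finset.sum_congr rfl fun k _ => hsplit k, Finset.sum_sub_distrib]
  have hre : ∑ k : Fin (m+1),
      ((if (k : ℕ) < (b : ℕ) then (-1:ℂ) else 1) * (if (k : ℕ) = m then (-1:ℂ) else 1))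
        * M (a + b - k - 1) (k + 1)
      = ∑ j : Fin (m+1),
      ((if ((j - 1 : Fin (m+1)) : ℕ) < (b : ℕ) then (-1:ℂ) else 1) *
        (if ((j - 1 : Fin (m+1)) : ℕ) = m then (-1:ℂ) else 1)) * M (a + b - j) j := by
    apply Fintype.sum_equiv (Equiv.addRight (1 : Fin (m+1)))
    intro k
    simp only [Equiv.coe_addRight, add_sub_cancel_right, sub_sub]
  rw [hre, ← Finset.sum_sub_distrib]
  have hpt : ∀ j : Fin (m+1),
      (if (j : ℕ) < (b : ℕ) then (-1:ℂ) else 1) * M (a + b - j) j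
        - ((if ((j - 1 : Fin (m+1)) : ℕ) < (b : ℕ) then (-1:ℂ) else 1) *
            (if ((j - 1 : Fin (m+1)) : ℕ) = m then (-1:ℂ) else 1)) * M (a + b - j) j
      = if j = b then 2 * M a b else 0 := by
    intro j
    rw [Fin.coe_sub_one, ← sub_mul]
    by_cases hjb : j = b
    · subst hjb
      rw [if_pos rfl]
      have hj : a + j - j = a := by ring
      rw [hj]
      suffices h : ((if (j : ℕ) < (j : ℕ) then (-1:ℂ) else 1) -
          (if (if j = 0 then m else (j : ℕ) - 1) < (j : ℕ) then (-1:ℂ) else 1) *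
            (if (if j = 0 then m else (j : ℕ) - 1) = m then (-1:ℂ) else 1)) = 2 by
        rw [h]
      rw [if_neg (lt_irrefl _)]
      by_cases hj0 : j = 0
      · subst hj0
        rw [if_pos rfl]
        simp only [Fin.val_zero]
        norm_num
      · rw [if_neg hj0]
        have hjv : (j : ℕ) ≠ 0 := fun h => hj0 (Fin.ext (by simp [h]))
        have hjl := j.isLt
        rw [if_pos (by omega : (j : ℕ) - 1 < (j : ℕ)), if_neg (by omega : ¬ (j : ℕ) - 1 = m)]
        norm_num
    · rw [if_neg hjb]
      have hne : (j : ℕ) ≠ (b : ℕ) := fun h => hjb (Fin.ext h)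
      suffices h : ((if (j : ℕ) < (b : ℕ) then (-1:ℂ) else 1) -
          (if (if j = 0 then m else (j : ℕ) - 1) < (b : ℕ) then (-1:ℂ) else 1) *
            (if (if j = 0 then m else (j : ℕ) - 1) = m then (-1:ℂ) else 1)) = 0 by
        rw [h, zero_mul]
      by_cases hj0 : j = 0
      · subst hj0
        rw [if_pos rfl]
        have hb0 : 0 < (b : ℕ) := by
          rcases Nat.eq_zero_or_pos (b : ℕ) with h | h
          · exact absurd (Fin.ext (by simp [h]) : (0 : Fin (m+1)) = b) hjb
          · exact h
        have hbm : ¬ m < (b : ℕ) := by have := b.isLt; omega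
        rw [if_pos (by simpa using hb0), if_neg hbm, if_pos rfl]
        norm_num
      · rw [if_neg hj0]
        have hjv : (j : ℕ) ≠ 0 := fun h => hj0 (Fin.ext (by simp [h]))
        have hjl := j.isLt
        rw [if_neg (by omega : ¬ (j : ℕ) - 1 = m), mul_one]
        split_ifs <;> first | (exfalso; omega) | norm_num
  rw [Finset.sum_congr rfl fun j _ => hpt j, Finset.sum_ite_eq' Finset.univ]
  simp

/-- Stein-type LCU decomposition: with m-hat_{i,k} the (i,k) entry of Δ_{Z_1,Z_{−1}}[M],
M = (1/2) · Σ_{i,k} m-hat_{i,k} · Z_1^i · J · Z_{−1}^{n−1−k}. -/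
theorem stein_LCU_decomposition (n : ℕ) (M : Matrix (Fin n) (Fin n) ℂ) :
    M = (1 / 2 : ℂ) •
      ∑ i : Fin n, ∑ k : Fin n,
        (M i k - (-1 : ℂ) ^ gfun n (k : ℕ) *
            M ⟨((i : ℕ) + n - 1) % n, Nat.mod_lt _ i.pos⟩
              ⟨((k : ℕ) + 1) % n, Nat.mod_lt _ k.pos⟩) •
          (Zf n 1 ^ (i : ℕ) * Jrev n * Zf n (-1) ^ (n - 1 - (k : ℕ))) := by
  rcases Nat.eq_zero_or_pos n with hn0 | hn0
  · subst hn0; ext a b; exact a.elim0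
  obtain ⟨m, rfl⟩ : ∃ m, n = m + 1 := ⟨n - 1, by omega⟩
  ext a b
  simp only [Matrix.smul_apply, Matrix.sum_apply, smul_eq_mul, Nat.add_sub_cancel]
  rw [Finset.sum_comm]
  have hb := b.isLt
  have ha := a.isLt
  have hcond : ∀ (k i : Fin (m+1)),
      ((a : ℕ) = (m - (((b : ℕ) + (m - (k : ℕ))) % (m+1)) + (i : ℕ)) % (m+1)) ↔
        i = a + b - k := by
    intro k i
    have hk := k.isLt
    set c : ℕ := m - (((b : ℕ) + (m - (k : ℕ))) % (m+1)) with hc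
    have h1 : ((c : ℕ) : Fin (m+1)) = k - b := by
      rw [hc, mod_small (by omega)]
      by_cases hkb : (b : ℕ) ≤ (k : ℕ)
      · rw [if_pos (by omega)]
        have h2 : m - ((b : ℕ) + (m - (k : ℕ))) = (k : ℕ) - (b : ℕ) := by omega
        rw [h2, Nat.cast_sub hkb, Fin.cast_val_eq_self, Fin.cast_val_eq_self]
      · rw [if_neg (by omega)]
        have h2 : m - ((b : ℕ) + (m - (k : ℕ)) - (m+1)) = (m+1) - ((b : ℕ) - (k : ℕ)) := by
          omega
        rw [h2, Nat.cast_sub (by omega), Nat.cast_sub (by omega), Fin.natCast_self,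
          Fin.cast_val_eq_self, Fin.cast_val_eq_self, zero_sub, neg_sub]
    have h3 : (c + (i : ℕ)) % (m+1) = (((k - b + i : Fin (m+1))) : ℕ) := by
      have h4 : ((c + (i : ℕ) : ℕ) : Fin (m+1)) = k - b + i := by
        rw [Nat.cast_add, h1, Fin.cast_val_eq_self]
      rw [← h4, Fin.val_natCast]
    rw [h3, ← Fin.ext_iff]
    constructor
    · intro h; rw [h]; ring
    · intro h; rw [h]; ring
  have hidx1 : ∀ (x : Fin (m+1)) (h : ((x : ℕ) + (m+1) - 1) % (m+1) < m+1),
      (⟨((x : ℕ) + (m+1) - 1) % (m+1), h⟩ : Fin (m+1)) = x - 1 := by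
    intro x h
    apply Fin.ext
    show ((x : ℕ) + (m+1) - 1) % (m+1) = ((x - 1 : Fin (m+1)) : ℕ)
    rw [Fin.coe_sub_one]
    have hx : (x = 0) ↔ ((x : ℕ) = 0) := by rw [Fin.ext_iff, Fin.val_zero]
    have hxl := x.isLt
    rw [mod_small (by omega)]
    simp only [hx]
    split_ifs <;> omega
  have hidx2 : ∀ (k : Fin (m+1)) (h : ((k : ℕ) + 1) % (m+1) < m+1),
      (⟨((k : ℕ) + 1) % (m+1), h⟩ : Fin (m+1)) = k + 1 := by
    intro k h
    apply Fin.ext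
    show ((k : ℕ) + 1) % (m+1) = ((k + 1 : Fin (m+1)) : ℕ)
    rw [Fin.val_add, Fin.val_one']
    conv_lhs => rw [Nat.add_mod]
    rw [Nat.mod_eq_of_lt k.isLt]
  have hg : ∀ k : Fin (m+1), (-1:ℂ) ^ gfun (m+1) (k : ℕ) =
      if (k : ℕ) = m then (-1:ℂ) else 1 := by
    intro k
    simp only [gfun, Nat.add_sub_cancel]
    split_ifs <;> norm_num
  have hs : ∀ k : Fin (m+1), (-1:ℂ) ^ (((b : ℕ) + (m - (k : ℕ))) / (m+1)) =
      if (k : ℕ) < (b : ℕ) then (-1:ℂ) else 1 := by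
    intro k
    have hk := k.isLt
    rw [div_small (by omega)]
    by_cases h : (k : ℕ) < (b : ℕ)
    · rw [if_neg (by omega), if_pos h]; norm_num
    · rw [if_pos (by omega), if_neg h]; norm_num
  simp only [Zf_prod_apply, Nat.add_sub_cancel]
  simp only [hg, hs, hcond, hidx1, hidx2, mul_ite, mul_zero]
  simp only [Finset.sum_ite_eq', Finset.mem_univ, if_true]
  simp only [← mul_ite]
  rw [telescope]
  ring
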